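/- Any unitary matrix U ∈ SU(d) can be decomposed as a finite product of unitaries each of which acts nontrivially only on a two-dimensional subspace spanned by two adjacent computational basis vectors |m⟩, |m+1⟩, using at most d(d-1)(2d-1)/6 factors. -/

import Mathlib

open Matrix

/-- `V` is a unitary acting nontrivially only on the two adjacent modes `m, m+1`. -/
def IsAdjacentTwoModeUnitary {d : ℕ} (V : Matrix (Fin d) (Fin d) ℂ) : Prop :=
  V ∈ Matrix.unitaryGroup (Fin d) ℂ ∧
  ∃ m : ℕ, m + 2 ≤ d ∧
    ∀ i j : Fin d,
      (((i : ℕ) ≠ m ∧ (i : ℕ) ≠ m + 1) ∨ ((j : ℕ) ≠ m ∧ (j : ℕ) ≠ m + 1)) →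
        V i j = (1 : Matrix (Fin d) (Fin d) ℂ) i j

namespace SUdec
variable {d m : ℕ} {a b c e : ℂ}

def emb (d m : ℕ) (a b c e : ℂ) : Matrix (Fin d) (Fin d) ℂ :=
  fun i j =>
    if (i : ℕ) = m ∧ (j : ℕ) = m then a
    else if (i : ℕ) = m ∧ (j : ℕ) = m + 1 then b
    else if (i : ℕ) = m + 1 ∧ (j : ℕ) = m then c
    else if (i : ℕ) = m + 1 ∧ (j : ℕ) = m + 1 then e
    else if i = j then 1 else 0

lemma emb_conjTranspose :
    star (emb d m a b c e) = emb d m (star a) (star c) (star b) (star e) := by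
  ext i j
  simp only [Matrix.star_eq_conjTranspose, Matrix.conjTranspose_apply, emb, Fin.ext_iff]
  split_ifs
  all_goals (first | rfl | (exfalso; omega) | simp)

lemma emb_row_m' (hm : m + 1 < d) {i : Fin d} (hi : (i : ℕ) = m) (k : Fin d) :
    emb d m a b c e i k
      = (if k = (⟨m, by omega⟩ : Fin d) then a else 0)
        + (if k = (⟨m + 1, hm⟩ : Fin d) then b else 0) := by
  have hik : i = k ↔ (k : ℕ) = m := by
    rw [Fin.ext_iff, hi]; exact eq_comm
  rcases eq_or_ne (k : ℕ) m with h | h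
  · simp [emb, hi, h, Fin.ext_iff]
  · rcases eq_or_ne (k : ℕ) (m + 1) with h2 | h2
    · simp [emb, hi, h, h2, Fin.ext_iff]
    · simp [emb, hi, h, h2, Fin.ext_iff, hik]

lemma emb_row_m1' (hm : m + 1 < d) {i : Fin d} (hi : (i : ℕ) = m + 1) (k : Fin d) :
    emb d m a b c e i k
      = (if k = (⟨m, by omega⟩ : Fin d) then c else 0)
        + (if k = (⟨m + 1, hm⟩ : Fin d) then e else 0) := by
  have hik : i = k ↔ (k : ℕ) = m + 1 := by
    rw [Fin.ext_iff, hi]; exact eq_comm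
  have hmm : (m : ℕ) ≠ m + 1 := by omega
  rcases eq_or_ne (k : ℕ) m with h | h
  · simp [emb, hi, h, Fin.ext_iff, hmm]
  · rcases eq_or_ne (k : ℕ) (m + 1) with h2 | h2
    · simp [emb, hi, h, h2, Fin.ext_iff, hmm]
    · simp [emb, hi, h, h2, Fin.ext_iff, hik, hmm]

lemma emb_row_other' {i : Fin d} (h1 : (i : ℕ) ≠ m) (h2 : (i : ℕ) ≠ m + 1) (k : Fin d) :
    emb d m a b c e i k = if i = k then 1 else 0 := by
  simp [emb, h1, h2]

lemma emb_mul' (hm : m + 1 < d) (M : Matrix (Fin d) (Fin d) ℂ) (i j : Fin d) :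
    (emb d m a b c e * M) i j =
      if (i : ℕ) = m then a * M ⟨m, by omega⟩ j + b * M ⟨m + 1, hm⟩ j
      else if (i : ℕ) = m + 1 then c * M ⟨m, by omega⟩ j + e * M ⟨m + 1, hm⟩ j
      else M i j := by
  rw [Matrix.mul_apply]
  by_cases h1 : (i : ℕ) = m
  · simp only [if_pos h1]
    rw [Finset.sum_congr rfl (fun k _ => by rw [emb_row_m' hm h1 k])]
    simp [add_mul, ite_mul, Finset.sum_add_distrib]
  · by_cases h2 : (i : ℕ) = m + 1
    · simp only [if_neg h1, if_pos h2]
      rw [Finset.sum_congr rfl (fun k _ => by rw [emb_row_m1' hm h2 k])]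
      simp [add_mul, ite_mul, Finset.sum_add_distrib]
    · simp only [if_neg h1, if_neg h2]
      rw [Finset.sum_congr rfl (fun k _ => by rw [emb_row_other' h1 h2 k])]
      simp

/-- the four unitarity equations for the 2x2 block -/
def blockUnitary (a b c e : ℂ) : Prop :=
  a * star a + b * star b = 1 ∧ a * star c + b * star e = 0 ∧
  c * star a + e * star b = 0 ∧ c * star c + e * star e = 1

lemma emb_mem_unitary (hm : m + 1 < d) (h : blockUnitary a b c e) :
    emb d m a b c e ∈ Matrix.unitaryGroup (Fin d) ℂ := by
  obtain ⟨h1, h2, h3, h4⟩ := h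
  simp only [Complex.star_def] at h1 h2 h3 h4
  rw [Matrix.mem_unitaryGroup_iff]
  ext i j
  rw [emb_conjTranspose, emb_mul' hm]
  have hvm : ((⟨m, by omega⟩ : Fin d) : ℕ) = m := rfl
  have hvm1 : ((⟨m + 1, hm⟩ : Fin d) : ℕ) = m + 1 := rfl
  have e0 : (j = (⟨m, by omega⟩ : Fin d)) ↔ (j : ℕ) = m := by rw [Fin.ext_iff]
  have e1 : (j = (⟨m + 1, hm⟩ : Fin d)) ↔ (j : ℕ) = m + 1 := by rw [Fin.ext_iff]
  by_cases hi : (i : ℕ) = m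
  · rw [if_pos hi, emb_row_m' hm hvm j, emb_row_m1' hm hvm1 j]
    have hij : i = j ↔ (j : ℕ) = m := by rw [Fin.ext_iff, hi]; exact eq_comm
    rcases eq_or_ne (j : ℕ) m with h | h
    · simp only [e0, e1, h, if_pos, if_true, Matrix.one_apply, hij.mpr h,
        if_neg (by omega : ¬ (m = m + 1)), add_zero, zero_add, Complex.star_def]
      linear_combination h1
    · rcases eq_or_ne (j : ℕ) (m + 1) with h2' | h2'
      · have hij' : ¬ i = j := by rw [hij]; exact h
        simp only [e0, e1, h, h2', if_neg, if_pos, if_true, if_false, Matrix.one_apply,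
          if_neg hij', add_zero, zero_add, Complex.star_def,
          if_neg (by omega : ¬ (m + 1 = m))]
        linear_combination h2
      · have hij' : ¬ i = j := by rw [hij]; exact h
        simp [e0, e1, h, h2', Matrix.one_apply, hij']
  · by_cases hi2 : (i : ℕ) = m + 1
    · rw [if_neg hi, if_pos hi2, emb_row_m' hm hvm j, emb_row_m1' hm hvm1 j]
      have hij : i = j ↔ (j : ℕ) = m + 1 := by rw [Fin.ext_iff, hi2]; exact eq_comm
      rcases eq_or_ne (j : ℕ) m with h | h
      · have hij' : ¬ i = j := by rw [hij]; omega
        simp only [e0, e1, h, if_pos, if_true, Matrix.one_apply, if_neg hij',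
          if_neg (by omega : ¬ (m = m + 1)), add_zero, zero_add, Complex.star_def]
        linear_combination h3
      · rcases eq_or_ne (j : ℕ) (m + 1) with h2' | h2'
        · simp only [e0, e1, h, h2', if_neg, if_pos, if_true, if_false, Matrix.one_apply,
            if_pos (hij.mpr h2'), add_zero, zero_add, Complex.star_def,
            if_neg (by omega : ¬ (m + 1 = m))]
          linear_combination h4
        · have hij' : ¬ i = j := by rw [hij]; exact h2'
          simp [e0, e1, h, h2', Matrix.one_apply, hij']
    · rw [if_neg hi, if_neg hi2, emb_row_other' hi hi2 j, Matrix.one_apply]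


lemma emb_adjacent (hm : m + 1 < d) (h : blockUnitary a b c e) :
    IsAdjacentTwoModeUnitary (emb d m a b c e) := by
  refine ⟨emb_mem_unitary hm h, m, by omega, fun i j hij => ?_⟩
  rcases hij with ⟨h1, h2⟩ | ⟨h1, h2⟩
  · simp [emb, Matrix.one_apply, h1, h2]
  · simp [emb, Matrix.one_apply, h1, h2]

lemma star_adjacent {W : Matrix (Fin d) (Fin d) ℂ} (h : IsAdjacentTwoModeUnitary W) :
    IsAdjacentTwoModeUnitary (star W) := by
  obtain ⟨hu, mm, hmm, hoff⟩ := h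
  refine ⟨Unitary.star_mem hu, mm, hmm, fun i j hij => ?_⟩
  have := hoff j i (by tauto)
  rw [Matrix.star_eq_conjTranspose, Matrix.conjTranspose_apply, this, Matrix.one_apply,
    Matrix.one_apply]
  by_cases hji : j = i
  · simp [hji]
  · rw [if_neg hji, if_neg (fun hh : i = j => hji hh.symm)]
    exact star_zero _

/-- identity outside the first `n` modes -/
def Supp (n : ℕ) (M : Matrix (Fin d) (Fin d) ℂ) : Prop :=
  ∀ i j : Fin d, (n ≤ (i : ℕ) ∨ n ≤ (j : ℕ)) → M i j = (1 : Matrix (Fin d) (Fin d) ℂ) i j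

lemma supp_mul {s : ℕ} (hm : m + 1 < d) (hms : m + 1 < s)
    {M : Matrix (Fin d) (Fin d) ℂ} (hM : Supp s M) : Supp s (emb d m a b c e * M) := by
  intro i j hij
  rw [emb_mul' hm]
  rcases hij with hij | hij
  · rw [if_neg (by omega : ¬ (i : ℕ) = m), if_neg (by omega : ¬ (i : ℕ) = m + 1)]
    exact hM i j (Or.inl hij)
  · have hMm : M ⟨m, by omega⟩ j = 0 := by
      rw [hM _ j (Or.inr hij), Matrix.one_apply, if_neg]
      rw [Fin.ext_iff]; simp; omega
    have hMm1 : M ⟨m + 1, by omega⟩ j = 0 := by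
      rw [hM _ j (Or.inr hij), Matrix.one_apply, if_neg]
      rw [Fin.ext_iff]; simp; omega
    by_cases h1 : (i : ℕ) = m
    · rw [if_pos h1, hMm, hMm1, Matrix.one_apply, if_neg (by rw [Fin.ext_iff]; omega)]
      ring
    · by_cases h2 : (i : ℕ) = m + 1
      · rw [if_neg h1, if_pos h2, hMm, hMm1, Matrix.one_apply,
          if_neg (by rw [Fin.ext_iff]; omega)]
        ring
      · rw [if_neg h1, if_neg h2]
        exact hM i j (Or.inr hij)

lemma rot_exists (x y : ℂ) :
    ∃ a b c e : ℂ, blockUnitary a b c e ∧ a * x + b * y = 0 := by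
  by_cases h0 : x = 0 ∧ y = 0
  · exact ⟨1, 0, 0, 1, ⟨by simp, by simp, by simp, by simp⟩, by simp [h0.1, h0.2]⟩
  · have hpos : 0 < Complex.normSq x + Complex.normSq y := by
      rcases not_and_or.mp h0 with h | h
      · have := Complex.normSq_pos.mpr h
        have := Complex.normSq_nonneg y
        linarith
      · have := Complex.normSq_pos.mpr h
        have := Complex.normSq_nonneg x
        linarith
    set s : ℝ := Real.sqrt (Complex.normSq x + Complex.normSq y) with hs_def
    have hs : 0 < s := Real.sqrt_pos.mpr hpos
    have hs0 : (s : ℂ) ≠ 0 := by exact_mod_cast hs.ne'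
    have hs2 : (s : ℂ) * (s : ℂ) = (Complex.normSq x : ℂ) + (Complex.normSq y : ℂ) := by
      rw [← Complex.ofReal_mul, Real.mul_self_sqrt hpos.le, Complex.ofReal_add]
    have hconjs : (starRingEnd ℂ) (s : ℂ) = (s : ℂ) := Complex.conj_ofReal s
    refine ⟨y / s, -x / s, (starRingEnd ℂ) x / s, (starRingEnd ℂ) y / s, ⟨?_, ?_, ?_, ?_⟩, ?_⟩
    · simp only [Complex.star_def, map_div₀, map_neg, hconjs, Complex.conj_conj]
      field_simp
      rw [Complex.mul_conj, Complex.mul_conj] at *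
      rw [sq, hs2]
      try ring
    · simp only [Complex.star_def, map_div₀, map_neg, hconjs, Complex.conj_conj]
      field_simp
      ring
    · simp only [Complex.star_def, map_div₀, map_neg, hconjs, Complex.conj_conj]
      field_simp
      ring
    · simp only [Complex.star_def, map_div₀, map_neg, hconjs, Complex.conj_conj]
      field_simp
      rw [mul_comm ((starRingEnd ℂ) x) x, mul_comm ((starRingEnd ℂ) y) y,
        Complex.mul_conj, Complex.mul_conj]
      rw [sq, hs2]
      try ring
    · field_simp
      ring


lemma clear {d : ℕ} (n : ℕ) (hnd : n + 1 ≤ d) :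
    ∀ k, k ≤ n → ∀ U : Matrix (Fin d) (Fin d) ℂ, U ∈ Matrix.unitaryGroup (Fin d) ℂ →
      Supp (n + 1) U →
      ∃ (L : List (Matrix (Fin d) (Fin d) ℂ)) (M : Matrix (Fin d) (Fin d) ℂ),
        L.length = k ∧ (∀ W ∈ L, IsAdjacentTwoModeUnitary W) ∧
        M ∈ Matrix.unitaryGroup (Fin d) ℂ ∧ Supp (n + 1) M ∧
        (∀ i : Fin d, (i : ℕ) < k → M i ⟨n, by omega⟩ = 0) ∧ U = L.prod * M := by
  intro k
  induction k with
  | zero =>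
    intro _ U hU hS
    exact ⟨[], U, rfl, by simp, hU, hS, fun i hi => absurd hi (Nat.not_lt_zero _), by simp⟩
  | succ k ih =>
    intro hk U hU hS
    obtain ⟨L, M, hlen, hadj, hMu, hMs, hz, hprod⟩ := ih (by omega) U hU hS
    have hkd : k + 1 < d := by omega
    obtain ⟨a, b, c, e, hbu, hzero⟩ :=
      rot_exists (M ⟨k, by omega⟩ ⟨n, by omega⟩) (M ⟨k + 1, by omega⟩ ⟨n, by omega⟩)
    have hWu := emb_mem_unitary hkd hbu
    have hWadj := emb_adjacent hkd hbu
    refine ⟨L ++ [star (emb d k a b c e)], emb d k a b c e * M, by simp [hlen], ?_,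
      mul_mem hWu hMu, supp_mul hkd (by omega) hMs, ?_, ?_⟩
    · intro W hW
      rcases List.mem_append.mp hW with h | h
      · exact hadj W h
      · rw [List.mem_singleton.mp h]
        exact star_adjacent hWadj
    · intro i hi
      rw [emb_mul' hkd]
      by_cases h1 : (i : ℕ) = k
      · rw [if_pos h1]
        exact hzero
      · rw [if_neg h1, if_neg (by omega : ¬ (i : ℕ) = k + 1)]
        exact hz i (by omega)
    · rw [hprod, List.prod_append, List.prod_singleton, mul_assoc, ← mul_assoc (star _),
        (Unitary.mem_iff.mp hWu).1, one_mul]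

lemma key {d : ℕ} : ∀ n (hn : 2 ≤ n), n ≤ d →
    ∀ U : Matrix (Fin d) (Fin d) ℂ, U ∈ Matrix.unitaryGroup (Fin d) ℂ → Supp n U →
    ∃ L : List (Matrix (Fin d) (Fin d) ℂ),
      (∀ W ∈ L, IsAdjacentTwoModeUnitary W) ∧
      6 * L.length ≤ n * (n - 1) * (2 * n - 1) ∧ U = L.prod := by
  intro n hn
  induction n, hn using Nat.le_induction with
  | base =>
    intro hd U hU hS
    refine ⟨[U], ?_, by norm_num, by simp⟩
    intro W hW
    rw [List.mem_singleton.mp hW]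
    exact ⟨hU, 0, by omega, fun i j hij => hS i j (by omega)⟩
  | succ n hn ih =>
    intro hd U hU hS
    obtain ⟨m, rfl⟩ : ∃ m, n = m + 1 := ⟨n - 1, by omega⟩
    have hm1 : 1 ≤ m := by omega
    have hmd : m + 1 < d := by omega
    obtain ⟨L₁, M, hlen₁, hadj₁, hMu, hMs, hz, hprod₁⟩ :=
      clear (m + 1) (by omega) (m + 1) le_rfl U hU hS
    set cn : Fin d := ⟨m + 1, hmd⟩ with hcn
    have hcnv : (cn : ℕ) = m + 1 := rfl
    set z : ℂ := M cn cn with hzdef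
    have hcol : ∀ i : Fin d, i ≠ cn → M i cn = 0 := by
      intro i hi
      by_cases h : (i : ℕ) < m + 1
      · exact hz i h
      · have hiv : (i : ℕ) ≠ m + 1 := fun hh => hi (Fin.ext (hh.trans hcnv.symm))
        have h2 : m + 2 ≤ (i : ℕ) := by omega
        rw [hMs i cn (Or.inl h2), Matrix.one_apply, if_neg hi]
    have hzz : (starRingEnd ℂ) z * z = 1 := by
      have h1 : (star M * M) cn cn = 1 := by
        rw [(Unitary.mem_iff.mp hMu).1, Matrix.one_apply_eq]
      rw [Matrix.mul_apply] at h1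
      rw [← h1, Finset.sum_eq_single cn]
      · rw [Matrix.star_eq_conjTranspose, Matrix.conjTranspose_apply, ← hzdef,
          Complex.star_def]
      · intro t _ ht
        rw [hcol t ht, mul_zero]
      · intro h; exact absurd (Finset.mem_univ cn) h
    have hDu : blockUnitary (1 : ℂ) 0 0 ((starRingEnd ℂ) z) := by
      refine ⟨by simp, by simp, by simp, ?_⟩
      simp only [Complex.star_def, Complex.conj_conj, map_zero, zero_mul, zero_add]
      exact hzz
    have hDmem := emb_mem_unitary hmd hDu
    set D : Matrix (Fin d) (Fin d) ℂ := emb d m 1 0 0 ((starRingEnd ℂ) z) with hD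
    set M' : Matrix (Fin d) (Fin d) ℂ := D * M with hM'
    have hM'u : M' ∈ Matrix.unitaryGroup (Fin d) ℂ := mul_mem hDmem hMu
    have hM's : Supp (m + 2) M' := supp_mul hmd (by omega) hMs
    have hcol' : ∀ i : Fin d, M' i cn = if i = cn then 1 else 0 := by
      intro i
      have hic : (i = cn) ↔ (i : ℕ) = m + 1 := by rw [Fin.ext_iff, hcnv]
      rw [hM', emb_mul' hmd]
      by_cases h1 : (i : ℕ) = m
      · rw [if_pos h1, if_neg (by rw [hic]; omega)]
        have hmne : (⟨m, by omega⟩ : Fin d) ≠ cn := by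
          intro hh
          have h' : m = m + 1 := Fin.ext_iff.mp hh
          omega
        rw [hcol _ hmne]
        ring
      · by_cases h2 : (i : ℕ) = m + 1
        · rw [if_neg h1, if_pos h2, if_pos (hic.mpr h2)]
          have hMcc : M ⟨m + 1, hmd⟩ cn = z := rfl
          rw [hMcc, hzz]
          ring
        · rw [if_neg h1, if_neg h2, if_neg (by rw [hic]; omega)]
          exact hcol i (by rw [Ne, hic]; omega)
    have hrow' : ∀ j : Fin d, j ≠ cn → M' cn j = 0 := by
      intro j hj
      have h1 : (M' * star M') cn cn = 1 := by
        rw [(Unitary.mem_iff.mp hM'u).2, Matrix.one_apply_eq]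
      rw [Matrix.mul_apply] at h1
      have h2 : ∀ t : Fin d, M' cn t * (star M') t cn = (Complex.normSq (M' cn t) : ℂ) := by
        intro t
        rw [Matrix.star_eq_conjTranspose, Matrix.conjTranspose_apply, Complex.star_def,
          Complex.mul_conj]
      rw [Finset.sum_congr rfl (fun t _ => h2 t)] at h1
      have h3 : (∑ t : Fin d, Complex.normSq (M' cn t)) = 1 := by
        rw [← Complex.ofReal_sum] at h1
        exact_mod_cast h1
      have h4 : Complex.normSq (M' cn cn) = 1 := by
        rw [hcol' cn, if_pos rfl]; simp
      have h5 : (∑ t ∈ Finset.univ.erase cn, Complex.normSq (M' cn t)) = 0 := by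
        have h6 := Finset.add_sum_erase Finset.univ (fun t => Complex.normSq (M' cn t))
          (Finset.mem_univ cn)
        rw [h3, h4] at h6
        linarith
      have h6 := (Finset.sum_eq_zero_iff_of_nonneg
        (fun t _ => Complex.normSq_nonneg (M' cn t))).mp h5
      have h7 : Complex.normSq (M' cn j) = 0 :=
        h6 j (Finset.mem_erase.mpr ⟨hj, Finset.mem_univ j⟩)
      exact Complex.normSq_eq_zero.mp h7
    have hM's' : Supp (m + 1) M' := by
      intro i j hij
      by_cases hi2 : m + 2 ≤ (i : ℕ)
      · exact hM's i j (Or.inl hi2)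
      · by_cases hj2 : m + 2 ≤ (j : ℕ)
        · exact hM's i j (Or.inr hj2)
        · rcases hij with hij | hij
          · have hicn : i = cn := Fin.ext (show (i : ℕ) = (cn : ℕ) by rw [hcnv]; omega)
            by_cases hji : j = cn
            · rw [hicn, hji, hcol' cn, if_pos rfl, Matrix.one_apply_eq]
            · rw [hicn, hrow' j hji, Matrix.one_apply,
                if_neg (fun hh : cn = j => hji hh.symm)]
          · have hjcn : j = cn := Fin.ext (show (j : ℕ) = (cn : ℕ) by rw [hcnv]; omega)
            rw [hjcn, hcol' i, Matrix.one_apply]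
    obtain ⟨L₂, hadj₂, hlen₂, hprod₂⟩ := ih (by omega) M' hM'u hM's'
    refine ⟨L₁ ++ [star D] ++ L₂, ?_, ?_, ?_⟩
    · intro W hW
      rcases List.mem_append.mp hW with hW | hW
      · rcases List.mem_append.mp hW with hW | hW
        · exact hadj₁ W hW
        · rw [List.mem_singleton.mp hW]
          exact star_adjacent (emb_adjacent hmd hDu)
      · exact hadj₂ W hW
    · have hL2 : 6 * L₂.length ≤ (m + 1) * m * (2 * m + 1) := by
        have h := hlen₂
        have e1 : (m + 1) - 1 = m := by omega
        have e2 : 2 * (m + 1) - 1 = 2 * m + 1 := by omega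
        rw [e1, e2] at h
        exact h
      have e3 : (m + 1 + 1) - 1 = m + 1 := by omega
      have e4 : 2 * (m + 1 + 1) - 1 = 2 * m + 3 := by omega
      rw [e3, e4]
      simp only [List.length_append, List.length_singleton, hlen₁]
      nlinarith [hL2, hm1]
    · rw [List.prod_append, List.prod_append, List.prod_singleton, ← hprod₂, hM',
        mul_assoc, ← mul_assoc (star D), (Unitary.mem_iff.mp hDmem).1, one_mul, ← hprod₁]


end SUdec

/-- **Decomposition into adjacent two-mode unitaries.**
Every `U ∈ SU(d)` is a product of at most `d(d-1)(2d-1)/6` unitaries, each acting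
nontrivially only on two adjacent computational basis modes. -/
theorem su_d_adjacent_two_mode_decomposition (d : ℕ) (hd : 2 ≤ d)
    (U : Matrix.specialUnitaryGroup (Fin d) ℂ) :
    ∃ K : ℕ, K ≤ d * (d - 1) * (2 * d - 1) / 6 ∧
      ∃ V : Fin K → Matrix (Fin d) (Fin d) ℂ,
        (∀ k, IsAdjacentTwoModeUnitary (V k)) ∧
        (U : Matrix (Fin d) (Fin d) ℂ) = ((List.ofFn V).reverse).prod := by
  have hU : (U : Matrix (Fin d) (Fin d) ℂ) ∈ Matrix.unitaryGroup (Fin d) ℂ :=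
    (Matrix.mem_specialUnitaryGroup_iff.mp U.2).1
  have hS : SUdec.Supp d (U : Matrix (Fin d) (Fin d) ℂ) := by
    intro i j hij
    rcases hij with h | h
    · exact absurd i.isLt (by omega)
    · exact absurd j.isLt (by omega)
  obtain ⟨L, hadj, hlen, hprod⟩ := SUdec.key d hd le_rfl _ hU hS
  refine ⟨L.reverse.length, ?_, L.reverse.get, ?_, ?_⟩
  · rw [Nat.le_div_iff_mul_le (by norm_num : 0 < 6), List.length_reverse]
    omega
  · intro k
    exact hadj _ (List.mem_reverse.mp (L.reverse.get_mem k))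
  · rw [List.ofFn_get, List.reverse_reverse, hprod]
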